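/- If (S_1,…,S_m) is a counterexample with parameters (m,n,k) that is minimal in the lexicographic order on (m,n,k), then for all i, j in {1,…,n}: |Q_i ∪ Q_j| ≠ m−1, where Q_ℓ = {t ∈ {1,…,m} : ℓ ∈ S_t}. -/

import Mathlib

/-- `K = Frac(ℚ[α₁,…,αₙ])`, the field of rational functions in `n` indeterminates over `ℚ`. -/
noncomputable abbrev Kf (n : ℕ) : Type := FractionRing (MvPolynomial (Fin n) ℚ)


open Polynomial

noncomputable section GMInfra

/-- product polynomial with roots `a ℓ`, `ℓ ∈ s` -/
def PP {F : Type*} [CommRing F] {n : ℕ} (a : Fin n → F) (s : Finset (Fin n)) : F[X] :=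
  ∏ ℓ ∈ s, (X - C (a ℓ))

variable {F : Type*}

lemma PP_monic [CommRing F] {n : ℕ} (a : Fin n → F) (s : Finset (Fin n)) : (PP a s).Monic :=
  monic_prod_of_monic _ _ fun _ _ => monic_X_sub_C _

lemma PP_natDegree [CommRing F] [Nontrivial F] {n : ℕ} (a : Fin n → F) (s : Finset (Fin n)) :
    (PP a s).natDegree = s.card := by
  rw [PP, Polynomial.natDegree_prod_of_monic _ _ fun _ _ => monic_X_sub_C _]
  simp

lemma PP_ne_zero [CommRing F] [Nontrivial F] {n : ℕ} (a : Fin n → F) (s : Finset (Fin n)) :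
    PP a s ≠ 0 := (PP_monic a s).ne_zero

/-- existence of a nontrivial bounded-degree relation among the `PP a (S t)` -/
def HasRel [CommRing F] (k : ℕ) {m n : ℕ} (S : Fin m → Finset (Fin n)) (a : Fin n → F) : Prop :=
  ∃ q : Fin m → F[X], (∃ i, q i ≠ 0) ∧
    (∀ i, q i ≠ 0 → ((q i).natDegree : ℤ) ≤ (k : ℤ) - 1 - ((S i).card : ℤ)) ∧
    ∑ i, q i * PP a (S i) = 0

variable {k m n : ℕ} {S : Fin m → Finset (Fin n)}

def RelMat [CommRing F] (k : ℕ) (S : Fin m → Finset (Fin n)) (a : Fin n → F) :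
    Matrix (Fin k) ((t : Fin m) × Fin (k - (S t).card)) F :=
  fun r c => (X ^ (c.2 : ℕ) * PP a (S c.1)).coeff r

def relEquiv (hsum : ∑ t, (k - (S t).card) = k) :
    ((t : Fin m) × Fin (k - (S t).card)) ≃ Fin k :=
  Fintype.equivFinOfCardEq (by simp [Fintype.card_sigma, hsum])

def detRel [CommRing F] (hsum : ∑ t, (k - (S t).card) = k) (a : Fin n → F) : F :=
  ((RelMat k S a).submatrix id ⇑(relEquiv hsum).symm).det

lemma detRel_comp {F' : Type*} [CommRing F] [CommRing F'] (f : F →+* F')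
    (hsum : ∑ t, (k - (S t).card) = k) (a : Fin n → F) :
    detRel hsum (fun ℓ => f (a ℓ)) = f (detRel hsum a) := by
  rw [detRel, detRel, RingHom.map_det]
  congr 1
  ext r c
  simp only [RingHom.mapMatrix_apply, Matrix.map_apply, Matrix.submatrix_apply, RelMat]
  rw [← Polynomial.coeff_map]
  congr 1
  simp only [Polynomial.map_mul, Polynomial.map_pow, Polynomial.map_X, PP,
    Polynomial.map_prod, Polynomial.map_sub, Polynomial.map_C]

lemma coeff_sum_eq_mulVec [CommRing F] (a : Fin n → F)
    (v : ((t : Fin m) × Fin (k - (S t).card)) → F) (r : Fin k) :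
    ((RelMat k S a).mulVec v) r
      = (∑ t, (∑ d : Fin (k - (S t).card), C (v ⟨t, d⟩) * X ^ (d : ℕ)) * PP a (S t)).coeff r := by
  rw [Polynomial.finset_sum_coeff]
  simp only [Matrix.mulVec, dotProduct, RelMat]
  rw [← Finset.univ_sigma_univ, Finset.sum_sigma]
  refine Finset.sum_congr rfl fun t _ => ?_
  rw [Finset.sum_mul, Polynomial.finset_sum_coeff]
  refine Finset.sum_congr rfl fun d _ => ?_
  rw [mul_assoc, Polynomial.coeff_C_mul, mul_comm]

theorem hasRel_iff_detRel [Field F] (hk0 : 0 < k) (hk : ∀ t, (S t).card < k)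
    (hsum : ∑ t, (k - (S t).card) = k) (a : Fin n → F) :
    HasRel k S a ↔ detRel hsum a = 0 := by
  rw [detRel, ← Matrix.exists_mulVec_eq_zero_iff]
  constructor
  · rintro ⟨q, ⟨t₀, ht₀⟩, hdeg, hrel⟩
    have hdegN : ∀ t, (q t).natDegree < k - (S t).card := by
      intro t
      by_cases h : q t = 0
      · simp only [h, Polynomial.natDegree_zero]; have := hk t; omega
      · have h1 := hdeg t h; have h2 := hk t; omega
    refine ⟨(fun c => (q c.1).coeff (c.2 : ℕ)) ∘ ⇑(relEquiv hsum).symm, ?_, ?_⟩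
    · intro h0
      have h1 := congrFun h0 (relEquiv hsum ⟨t₀, ⟨(q t₀).natDegree, hdegN t₀⟩⟩)
      simp only [Function.comp_apply, Pi.zero_apply] at h1
      rw [Equiv.symm_apply_apply] at h1
      exact ht₀ (Polynomial.leadingCoeff_eq_zero.mp h1)
    · rw [Matrix.submatrix_mulVec_equiv]
      funext r
      simp only [Function.comp_apply, id_eq, Equiv.symm_symm, Function.comp_assoc]
      have : ((fun c => (q c.1).coeff (c.2 : ℕ)) ∘ (⇑(relEquiv hsum).symm ∘ ⇑(relEquiv hsum)))
          = fun c : ((t : Fin m) × Fin (k - (S t).card)) => (q c.1).coeff (c.2 : ℕ) := by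
        funext c; simp
      rw [this, coeff_sum_eq_mulVec]
      have hq : ∀ t, (∑ d : Fin (k - (S t).card), C ((q t).coeff (d : ℕ)) * X ^ (d : ℕ)) = q t := by
        intro t
        conv_rhs => rw [(q t).as_sum_range' _ (hdegN t)]
        rw [← Fin.sum_univ_eq_sum_range (fun i => (Polynomial.monomial i) ((q t).coeff i))]
        refine Finset.sum_congr rfl fun d _ => ?_
        rw [Polynomial.C_mul_X_pow_eq_monomial]
      simp only [hq]
      rw [hrel]
      simp
  · rintro ⟨w, hw, hmv⟩
    set v : ((t : Fin m) × Fin (k - (S t).card)) → F := w ∘ ⇑(relEquiv hsum) with hv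
    have hMv : (RelMat k S a).mulVec v = 0 := by
      rw [Matrix.submatrix_mulVec_equiv] at hmv
      simpa using hmv
    set q : Fin m → F[X] :=
      fun t => ∑ d : Fin (k - (S t).card), C (v ⟨t, d⟩) * X ^ (d : ℕ) with hqdef
    have hcoeff : ∀ t (d' : Fin (k - (S t).card)), (q t).coeff (d' : ℕ) = v ⟨t, d'⟩ := by
      intro t d'
      rw [hqdef]
      rw [Polynomial.finset_sum_coeff]
      rw [Finset.sum_eq_single d']
      · simp [Polynomial.coeff_C_mul, Polynomial.coeff_X_pow]
      · intro b _ hb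
        have : (d' : ℕ) ≠ (b : ℕ) := fun h => hb (Fin.ext h.symm)
        simp [Polynomial.coeff_C_mul, Polynomial.coeff_X_pow, this]
      · simp
    have hdegq : ∀ t, (q t).natDegree ≤ k - (S t).card - 1 := by
      intro t
      refine Polynomial.natDegree_sum_le_of_forall_le _ _ fun d _ => ?_
      refine le_trans (Polynomial.natDegree_C_mul_X_pow_le _ _) ?_
      have := d.2; omega
    refine ⟨q, ?_, ?_, ?_⟩
    · have : ∃ c, v c ≠ 0 := by
        by_contra hc
        push_neg at hc
        apply hw
        funext r
        have := hc ((relEquiv hsum).symm r)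
        simpa [hv] using this
      obtain ⟨c, hc⟩ := this
      refine ⟨c.1, fun h0 => hc ?_⟩
      rw [← hcoeff c.1 c.2, h0, Polynomial.coeff_zero]
    · intro t ht
      have h1 := hdegq t
      have h2 := hk t
      have h3 : (q t).natDegree + (S t).card + 1 ≤ k := by omega
      omega
    · have hdegT : (∑ t, q t * PP a (S t)).natDegree ≤ k - 1 := by
        refine Polynomial.natDegree_sum_le_of_forall_le _ _ fun t _ => ?_
        refine le_trans (Polynomial.natDegree_mul_le) ?_
        rw [PP_natDegree]
        have := hdegq t; have := hk t; omega
      ext r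
      rcases lt_or_ge r k with hr | hr
      · have := coeff_sum_eq_mulVec a v ⟨r, hr⟩
        rw [hMv] at this
        simpa [hqdef] using this.symm
      · have hlt : (∑ t, q t * PP a (S t)).natDegree < r := by omega
        rw [Polynomial.coeff_eq_zero_of_natDegree_lt hlt]
        simp

end GMInfra

noncomputable section KfLemmas

abbrev Rg (n : ℕ) := MvPolynomial (Fin n) ℚ

/-- the canonical indeterminates inside `Kf n` -/
def av (n : ℕ) : Fin n → Kf n := fun ℓ => algebraMap (Rg n) (Kf n) (MvPolynomial.X ℓ)

lemma av_injective (n : ℕ) : Function.Injective (av n) := fun a b h =>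
  MvPolynomial.X_injective (IsFractionRing.injective (Rg n) (Kf n) h)

lemma hasRel_merge {k m n : ℕ} {S : Fin m → Finset (Fin n)} (hk0 : 0 < k)
    (hk : ∀ t, (S t).card < k) (hsum : ∑ t, (k - (S t).card) = k) (f : Fin n → Fin n)
    (h : HasRel k S (av n)) : HasRel k S (av n ∘ f) := by
  rw [hasRel_iff_detRel hk0 hk hsum] at h ⊢
  have h1 : detRel hsum (av n)
      = algebraMap (Rg n) (Kf n) (detRel hsum (fun ℓ => MvPolynomial.X ℓ)) := by
    rw [← detRel_comp (algebraMap (Rg n) (Kf n)) hsum]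
    rfl
  have h2 : detRel hsum (fun ℓ => (MvPolynomial.X ℓ : Rg n)) = 0 := by
    apply IsFractionRing.injective (Rg n) (Kf n)
    rw [← h1, h, map_zero]
  have h3 : detRel hsum (fun ℓ => (MvPolynomial.X (f ℓ) : Rg n)) = 0 := by
    have hnat := detRel_comp ((MvPolynomial.rename f : Rg n →ₐ[ℚ] Rg n) : Rg n →+* Rg n) hsum
      (fun ℓ => (MvPolynomial.X ℓ : Rg n))
    simp only [AlgHom.coe_toRingHom, MvPolynomial.rename_X] at hnat
    rw [hnat, h2, map_zero]
  have h4 := detRel_comp (algebraMap (Rg n) (Kf n)) hsum (fun ℓ => (MvPolynomial.X (f ℓ) : Rg n))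
  rw [h3, map_zero] at h4
  rw [← h4]
  rfl

lemma hasRel_descend {k m N N' : ℕ} {W : Fin m → Finset (Fin N')} (hk0 : 0 < k)
    (hk : ∀ t, (W t).card < k) (hsum : ∑ t, (k - (W t).card) = k)
    (e : Fin N' → Fin N) (he : Function.Injective e)
    (h : HasRel k W (av N ∘ e)) : HasRel k W (av N') := by
  rw [hasRel_iff_detRel hk0 hk hsum] at h ⊢
  set g0 : Rg N' →+* Rg N :=
    ((MvPolynomial.rename e : Rg N' →ₐ[ℚ] Rg N) : Rg N' →+* Rg N) with hg0def
  have hg0 : Function.Injective ⇑((algebraMap (Rg N) (Kf N)).comp g0) := by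
    refine (IsFractionRing.injective (Rg N) (Kf N)).comp ?_
    exact MvPolynomial.rename_injective e he
  set g : Kf N' →+* Kf N := IsFractionRing.lift hg0 with hgdef
  have key : (fun ℓ => g (av N' ℓ)) = av N ∘ e := by
    funext ℓ
    show g (algebraMap (Rg N') (Kf N') (MvPolynomial.X ℓ)) = _
    rw [hgdef, IsFractionRing.lift_algebraMap]
    simp [hg0def, av]
  have hnat := detRel_comp g hsum (av N')
  rw [key, h] at hnat
  exact g.injective (by rw [← hnat, map_zero])

end KfLemmas

/-- For a set `S ⊆ {1,…,n}`, the polynomial `p_S(x) = ∏_{j ∈ S} (x - α_j)`. -/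
noncomputable def pS {n : ℕ} (S : Finset (Fin n)) : Polynomial (Kf n) :=
  ∏ j ∈ S, (Polynomial.X - Polynomial.C
    (algebraMap (MvPolynomial (Fin n) ℚ) (Kf n) (MvPolynomial.X j)))

/-- The GM-MDS condition: for every nonempty `I ⊆ [m]`,
`k - |⋂_{i∈I} S_i| ≥ ∑_{i∈I} (k - |S_i|)`. -/
def GMCond (m n k : ℕ) (S : Fin m → Finset (Fin n)) : Prop :=
  ∀ I : Finset (Fin m), ∀ hI : I.Nonempty,
    (k : ℤ) - ((I.inf' hI S).card : ℤ) ≥ ∑ i ∈ I, ((k : ℤ) - ((S i).card : ℤ))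

/-- A counterexample with parameters `(m, n, k)`: sets `S₁,…,S_m ⊆ [n]` with `m ≥ 2`,
`|S_i| ≤ k - 1`, `∑ |S_i| = (m-1)·k`, satisfying the GM-MDS condition, for which there
exist polynomials `q₁,…,q_m ∈ K[x]`, not all zero, with `deg q_i ≤ k-1-|S_i|` and
`∑ q_i · p_{S_i} = 0`. -/
def IsCounterexample (m n k : ℕ) (S : Fin m → Finset (Fin n)) : Prop :=
  2 ≤ m ∧ (∀ i, ((S i).card : ℤ) ≤ (k : ℤ) - 1) ∧
    (∑ i, (S i).card = (m - 1) * k) ∧ GMCond m n k S ∧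
    ∃ q : Fin m → Polynomial (Kf n),
      (∃ i, q i ≠ 0) ∧
      (∀ i, q i ≠ 0 → ((q i).natDegree : ℤ) ≤ (k : ℤ) - 1 - ((S i).card : ℤ)) ∧
      ∑ i, q i * pS (S i) = 0

/-- A minimal counterexample: one whose parameter triple `(m, n, k)` is lexicographically
least among the parameter triples of all counterexamples. -/
def IsMinimalCounterexample (m n k : ℕ) (S : Fin m → Finset (Fin n)) : Prop :=
  IsCounterexample m n k S ∧
    ∀ (m' n' k' : ℕ) (S' : Fin m' → Finset (Fin n')), IsCounterexample m' n' k' S' →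
      m < m' ∨ (m = m' ∧ (n < n' ∨ (n = n' ∧ k ≤ k')))

/-- `Q_ℓ = {t ∈ [m] : ℓ ∈ S_t}`. -/
def Q {m n : ℕ} (S : Fin m → Finset (Fin n)) (ℓ : Fin n) : Finset (Fin m) :=
  Finset.univ.filter (fun t => ℓ ∈ S t)


section Helpers

lemma pS_eq_PP {n : ℕ} (s : Finset (Fin n)) : pS s = PP (av n) s := rfl

/-- order-preserving enumeration of a finset of `Fin m` -/
def enum {m : ℕ} (c : Finset (Fin m)) : Fin c.card → Fin m :=
  fun b => ((c.orderIsoOfFin rfl) b : Fin m)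

lemma enum_injective {m : ℕ} (c : Finset (Fin m)) : Function.Injective (enum c) :=
  fun a b h => (c.orderIsoOfFin rfl).injective (Subtype.ext h)

lemma enum_mem {m : ℕ} (c : Finset (Fin m)) (b : Fin c.card) : enum c b ∈ c :=
  ((c.orderIsoOfFin rfl) b).2

lemma enum_surj {m : ℕ} (c : Finset (Fin m)) (t : Fin m) (ht : t ∈ c) :
    ∃ b, enum c b = t :=
  ⟨(c.orderIsoOfFin rfl).symm ⟨t, ht⟩, by simp [enum]⟩

lemma image_enum {m : ℕ} (c : Finset (Fin m)) :
    Finset.image (enum c) Finset.univ = c := by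
  ext t
  simp only [Finset.mem_image, Finset.mem_univ, true_and]
  exact ⟨fun ⟨b, hb⟩ => hb ▸ enum_mem c b, fun ht => enum_surj c t ht⟩

lemma sum_enum {m : ℕ} {A : Type*} [AddCommMonoid A] (c : Finset (Fin m)) (g : Fin m → A) :
    ∑ b, g (enum c b) = ∑ t ∈ c, g t := by
  conv_rhs => rw [← image_enum c]
  rw [Finset.sum_image (fun a _ b _ h => enum_injective c h)]

lemma mem_inf' {ι α : Type*} [Fintype α] [DecidableEq α] {I : Finset ι} (hI : I.Nonempty)
    (f : ι → Finset α) (x : α) : x ∈ I.inf' hI f ↔ ∀ t ∈ I, x ∈ f t := by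
  rw [Finset.inf'_eq_inf, Finset.mem_inf]

lemma inf'_image {m' m n : ℕ} {I : Finset (Fin m')} (hI : I.Nonempty) (φ : Fin m' → Fin m)
    (f : Fin m → Finset (Fin n)) :
    (I.image φ).inf' (hI.image φ) f = I.inf' hI (f ∘ φ) := by
  rw [Finset.inf'_eq_inf, Finset.inf'_eq_inf, Finset.inf_image]

/-- packaging: the ingredients of a counterexample -/
lemma build_cex {m' n k' : ℕ} (T : Fin m' → Finset (Fin n))
    (hm : 2 ≤ m')
    (hcard : ∀ t, (T t).card + 1 ≤ k')
    (hsum : ∑ t, (T t).card = (m' - 1) * k')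
    (hGM : GMCond m' n k' T)
    (hrel : HasRel k' T (av n)) : IsCounterexample m' n k' T := by
  refine ⟨hm, fun t => ?_, hsum, hGM, ?_⟩
  · have := hcard t; push_cast; omega
  · obtain ⟨q, h1, h2, h3⟩ := hrel
    exact ⟨q, h1, h2, by rw [← h3]; exact Finset.sum_congr rfl fun t _ => by rw [pS_eq_PP]⟩

lemma sum_k_sub {m' k' : ℕ} (c : Fin m' → ℕ) (hc : ∀ t, c t + 1 ≤ k')
    (hsum : ∑ t, c t = (m' - 1) * k') (hm : 1 ≤ m') :
    ∑ t, (k' - c t) = k' := by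
  obtain ⟨m'', rfl⟩ : ∃ m'', m' = m'' + 1 := ⟨m' - 1, by omega⟩
  have h1 : ∑ t, (k' - c t) + ∑ t, c t = (m'' + 1) * k' := by
    rw [← Finset.sum_add_distrib]
    have : ∀ t, k' - c t + c t = k' := fun t => by have := hc t; omega
    simp [this, Finset.sum_const, Finset.card_univ]
  simp only [Nat.add_sub_cancel] at hsum
  rw [hsum] at h1
  have : (m'' + 1) * k' = m'' * k' + k' := by ring
  omega

lemma gm_subfamily {m m' n k : ℕ} {S : Fin m → Finset (Fin n)} (hGM : GMCond m n k S)
    (φ : Fin m' → Fin m) (hφ : Function.Injective φ) : GMCond m' n k (S ∘ φ) := by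
  intro J hJ
  rw [← inf'_image hJ φ S]
  have := hGM (J.image φ) (hJ.image φ)
  rwa [Finset.sum_image (fun a _ b _ h => hφ h)] at this

end Helpers

section GMTransfer

lemma gm_sdiff {m m' n k : ℕ} {S : Fin m → Finset (Fin n)} (hGM : GMCond m n k S)
    {I : Finset (Fin m)} (hI : I.Nonempty) (φ : Fin m' → Fin m) (hφ : Function.Injective φ)
    (hφI : ∀ b, φ b ∈ I) (hZk : (I.inf' hI S).card ≤ k) :
    GMCond m' n (k - (I.inf' hI S).card) (fun b => S (φ b) \ I.inf' hI S) := by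
  intro J hJ
  set Z := I.inf' hI S with hZdef
  have hZsub : ∀ b, Z ⊆ S (φ b) := fun b x hx => (mem_inf' hI S x).mp hx _ (hφI b)
  have hinf : J.inf' hJ (fun b => S (φ b) \ Z) = (J.inf' hJ (fun b => S (φ b))) \ Z := by
    ext x
    simp only [mem_inf' hJ, Finset.mem_sdiff]
    constructor
    · intro h
      obtain ⟨b, hb⟩ := hJ
      exact ⟨fun t ht => (h t ht).1, (h b hb).2⟩
    · rintro ⟨h1, h2⟩ t ht
      exact ⟨h1 t ht, h2⟩
  have hGMJ := hGM (J.image φ) (hJ.image φ)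
  rw [Finset.sum_image (fun a _ b _ h => hφ h), inf'_image hJ φ S] at hGMJ
  have hZinf : Z ⊆ J.inf' hJ (fun b => S (φ b)) := by
    intro x hx
    rw [mem_inf' hJ]
    exact fun t _ => hZsub t hx
  have hc1 : Z.card ≤ (J.inf' hJ (fun b => S (φ b))).card := Finset.card_le_card hZinf
  have hsumeq : ∑ b ∈ J, ((↑(k - Z.card) : ℤ) - ((S (φ b) \ Z).card : ℤ))
      = ∑ b ∈ J, ((k : ℤ) - ((S (φ b)).card : ℤ)) := by
    refine Finset.sum_congr rfl fun b _ => ?_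
    have h2 : Z.card ≤ (S (φ b)).card := Finset.card_le_card (hZsub b)
    rw [Finset.card_sdiff_of_subset (hZsub b)]
    push_cast [Nat.cast_sub hZk, Nat.cast_sub h2]
    ring
  show (↑(k - Z.card) : ℤ) - _ ≥ _
  rw [hinf, Finset.card_sdiff_of_subset hZinf]
  calc (↑(k - Z.card) : ℤ) - ↑((J.inf' hJ fun b => S (φ b)).card - Z.card)
      = (k : ℤ) - ((J.inf' hJ fun b => S (φ b)).card : ℤ) := by
        push_cast [Nat.cast_sub hZk, Nat.cast_sub hc1]; ring
    _ ≥ ∑ b ∈ J, ((k : ℤ) - ((S (φ b)).card : ℤ)) := hGMJ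
    _ = _ := by rw [← hsumeq]

lemma gm_snoc {m n k : ℕ} {S : Fin m → Finset (Fin n)} (hGM : GMCond m n k S)
    {I : Finset (Fin m)} (hI : I.Nonempty)
    (htight : (k:ℤ) - ((I.inf' hI S).card : ℤ) = ∑ t ∈ I, ((k:ℤ) - ((S t).card :ℤ))) :
    GMCond (Iᶜ.card + 1) n k (Fin.snoc (fun b => S (enum Iᶜ b)) (I.inf' hI S)) := by
  set Z := I.inf' hI S with hZdef
  set cc := Iᶜ.card with hccdef
  set f : Fin cc → Finset (Fin n) := fun b => S (enum Iᶜ b) with hfdef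
  intro J hJ
  rw [Finset.inf'_eq_inf]
  set L : Fin (cc+1) := Fin.last cc with hLdef
  set J0 : Finset (Fin cc) := Finset.univ.filter (fun b => b.castSucc ∈ J) with hJ0def
  set Jm : Finset (Fin m) := J0.image (enum Iᶜ) with hJmdef
  have hJmI : Disjoint Jm I := by
    rw [Finset.disjoint_left]
    intro t ht
    rw [hJmdef, Finset.mem_image] at ht
    obtain ⟨b, _, rfl⟩ := ht
    have := enum_mem Iᶜ b
    rw [Finset.mem_compl] at this
    exact this
  have hJdecomp : J = (J0.image Fin.castSucc) ∪ (if L ∈ J then {L} else ∅) := by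
    ext a
    rcases Fin.eq_castSucc_or_eq_last a with ⟨b, rfl⟩ | rfl
    · simp only [Finset.mem_union, Finset.mem_image, hJ0def, Finset.mem_filter,
        Finset.mem_univ, true_and]
      constructor
      · intro h
        exact Or.inl ⟨b, h, rfl⟩
      · rintro (⟨b', hb', hbe⟩ | h)
        · rwa [← Fin.castSucc_injective _ hbe]
        · exfalso
          by_cases hL : L ∈ J
          · rw [if_pos hL, Finset.mem_singleton] at h
            exact (Fin.castSucc_lt_last b).ne h
          · rw [if_neg hL] at h
            exact Finset.notMem_empty _ h
    · simp only [Finset.mem_union, Finset.mem_image]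
      constructor
      · intro h
        right
        rw [if_pos h, Finset.mem_singleton]
      · rintro (⟨b', _, hbe⟩ | h)
        · exact absurd hbe (Fin.castSucc_lt_last b').ne
        · by_cases hL : L ∈ J
          · exact hL
          · rw [if_neg hL] at h
            exact absurd h (Finset.notMem_empty _)
  have hdisj : Disjoint (J0.image Fin.castSucc) (if L ∈ J then {L} else ∅) := by
    split
    · rw [Finset.disjoint_singleton_right, Finset.mem_image]
      rintro ⟨b, _, hbe⟩
      exact (Fin.castSucc_lt_last b).ne hbe
    · exact Finset.disjoint_empty_right _
  have hsumdec : ∑ a ∈ J, ((k:ℤ) - (((Fin.snoc f Z : Fin (cc+1) → Finset (Fin n)) a).card : ℤ))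
      = ∑ b ∈ J0, ((k:ℤ) - ((f b).card : ℤ)) + (if L ∈ J then (k:ℤ) - (Z.card : ℤ) else 0) := by
    conv_lhs => rw [hJdecomp]
    rw [Finset.sum_union hdisj, Finset.sum_image (fun a _ b _ h => Fin.castSucc_injective _ h)]
    congr 1
    · refine Finset.sum_congr rfl fun b _ => ?_
      rw [Fin.snoc_castSucc]
    · split
      · rw [Finset.sum_singleton, Fin.snoc_last]
      · simp
  have hinfdec : J.inf (Fin.snoc f Z) = J0.inf f ⊓ (if L ∈ J then Z else ⊤) := by
    conv_lhs => rw [hJdecomp]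
    rw [Finset.inf_union, Finset.inf_image]
    have h1 : J0.inf (Fin.snoc f Z ∘ Fin.castSucc) = J0.inf f :=
      Finset.inf_congr rfl (fun b _ => by simp)
    rw [h1]
    congr 1
    split
    · rw [Finset.inf_singleton, Fin.snoc_last]
    · simp
  have hJ0f : J0.inf f = Jm.inf S := by
    rw [hJmdef, Finset.inf_image]
    rfl
  have hJ0sum : ∑ b ∈ J0, ((k:ℤ) - ((f b).card : ℤ)) = ∑ t ∈ Jm, ((k:ℤ) - ((S t).card : ℤ)) := by
    rw [hJmdef, Finset.sum_image (fun a _ b _ h => enum_injective _ h)]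
  have hIinf : I.inf S = Z := (Finset.inf'_eq_inf hI S).symm
  show _ ≥ ∑ a ∈ J, ((k:ℤ) - (((Fin.snoc f Z : Fin (cc+1) → Finset (Fin n)) a).card : ℤ))
  rw [hsumdec, hinfdec, hJ0f, hJ0sum]
  by_cases hL : L ∈ J
  · rw [if_pos hL, if_pos hL]
    have hun : (Jm ∪ I).Nonempty := hI.mono Finset.subset_union_right
    have hGMun := hGM (Jm ∪ I) hun
    rw [Finset.inf'_eq_inf, Finset.inf_union, Finset.sum_union hJmI, hIinf] at hGMun
    linarith [htight]
  · rw [if_neg hL, if_neg hL, inf_top_eq, add_zero]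
    have hJm : Jm.Nonempty := by
      obtain ⟨a, ha⟩ := hJ
      rcases Fin.eq_castSucc_or_eq_last a with ⟨b, rfl⟩ | rfl
      · refine ⟨enum Iᶜ b, ?_⟩
        rw [hJmdef, Finset.mem_image]
        exact ⟨b, by rw [hJ0def]; simp [ha], rfl⟩
      · exact absurd ha hL
    have hGMm := hGM Jm hJm
    rwa [Finset.inf'_eq_inf] at hGMm

end GMTransfer

section NoTight

lemma no_tight {m n k : ℕ} {S : Fin m → Finset (Fin n)}
    (hmin : IsMinimalCounterexample m n k S) :
    ∀ I : Finset (Fin m), ∀ hI : I.Nonempty, 2 ≤ I.card → I ≠ Finset.univ →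
      (k : ℤ) - ((I.inf' hI S).card : ℤ) ≠ ∑ t ∈ I, ((k : ℤ) - ((S t).card : ℤ)) := by
  rintro I hI hI2 hIne htight
  obtain ⟨⟨hm2, hcards, hsumS, hGM, q, ⟨t₁, ht₁⟩, hdeg, hrel⟩, hminim⟩ := hmin
  set Z := I.inf' hI S with hZdef
  have hterm : ∀ t, (1:ℤ) ≤ (k:ℤ) - (S t).card := fun t => by have := hcards t; omega
  have hIcm : I.card < m := by
    have h1 := Finset.card_lt_card (Finset.ssubset_iff_subset_ne.mpr ⟨Finset.subset_univ I, hIne⟩)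
    simpa using h1
  have hZk : (Z.card : ℤ) ≤ (k:ℤ) - 2 := by
    have h1 : (I.card : ℤ) ≤ ∑ t ∈ I, ((k:ℤ) - (S t).card) := by
      calc (I.card : ℤ) = ∑ _t ∈ I, (1:ℤ) := by simp
      _ ≤ _ := Finset.sum_le_sum (fun t _ => hterm t)
    have h2 : (2:ℤ) ≤ ∑ t ∈ I, ((k:ℤ) - (S t).card) := le_trans (by exact_mod_cast hI2) h1
    omega
  have hZk0 : (0:ℤ) ≤ (Z.card : ℤ) := Int.natCast_nonneg _
  have hk2 : 2 ≤ k := by omega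
  have hZsub : ∀ t ∈ I, Z ⊆ S t := fun t ht x hx => (mem_inf' hI S x).mp hx t ht
  have hcardsN : ∀ t, (S t).card < k := fun t => by have := hcards t; omega
  have hZkN : Z.card + 2 ≤ k := by omega
  have hsumI : (∑ t ∈ I, ((S t).card:ℤ)) = I.card * k - k + Z.card := by
    have h3 : ∑ t ∈ I, ((k:ℤ) - (S t).card) = I.card * k - ∑ t ∈ I, ((S t).card:ℤ) := by
      rw [Finset.sum_sub_distrib]
      simp [mul_comm]
    rw [h3] at htight
    omega
  have hrelPP : ∑ t, q t * PP (av n) (S t) = 0 := by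
    rw [← hrel]
    exact Finset.sum_congr rfl fun t _ => by rw [pS_eq_PP]
  set G : Polynomial (Kf n) := ∑ t ∈ I, q t * PP (av n) ((S t) \ Z) with hGdef
  have hPPsplit : ∀ t ∈ I, PP (av n) (S t) = PP (av n) (S t \ Z) * PP (av n) Z := by
    intro t ht
    rw [PP, PP, PP, ← Finset.prod_sdiff (hZsub t ht)]
  have hFid : ∑ t ∈ I, q t * PP (av n) (S t) = G * PP (av n) Z := by
    rw [hGdef, Finset.sum_mul]
    refine Finset.sum_congr rfl fun t ht => ?_
    rw [hPPsplit t ht, mul_assoc]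
  have hdegN : ∀ t, (q t).natDegree ≤ k - 1 - (S t).card := by
    intro t
    by_cases h : q t = 0
    · simp [h]
    · have := hdeg t h; have := hcardsN t; omega
  by_cases hBC : (∃ t ∈ Iᶜ, q t ≠ 0) ∨ G ≠ 0
  · -- Construction B : replace the I-part by the single set Z
    set cc := Iᶜ.card with hcc
    have hccval : cc = m - I.card := by rw [hcc, Finset.card_compl]; simp
    have hcc1 : 1 ≤ cc := by omega
    set T : Fin (cc+1) → Finset (Fin n) := Fin.snoc (fun b => S (enum Iᶜ b)) Z with hT
    have hcompl2 : ∑ t ∈ Iᶜ, ((S t).card:ℤ) + ∑ t ∈ I, ((S t).card:ℤ) = ((m:ℤ)-1) * k := by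
      rw [Finset.sum_compl_add_sum]
      have : ((∑ t, (S t).card : ℕ) : ℤ) = (((m-1) * k : ℕ) : ℤ) := Nat.cast_inj.mpr hsumS
      push_cast [Nat.cast_sub (by omega : 1 ≤ m)] at this
      linear_combination this
    have hcc3 : (cc:ℤ) = (m:ℤ) - I.card := by rw [hccval]; push_cast [Nat.cast_sub (le_of_lt hIcm)]; ring
    have hcex : IsCounterexample (cc+1) n k T := by
      refine build_cex T (by omega) ?_ ?_ (gm_snoc hGM hI htight) ?_
      · intro a
        rcases Fin.eq_castSucc_or_eq_last a with ⟨b, rfl⟩ | rfl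
        · rw [hT]; simp only [Fin.snoc_castSucc]
          have := hcardsN (enum Iᶜ b); omega
        · rw [hT]; simp only [Fin.snoc_last]
          omega
      · have hN : ∑ a, (T a).card = (∑ b : Fin cc, (S (enum Iᶜ b)).card) + Z.card := by
          rw [hT, Fin.sum_univ_castSucc]
          simp only [Fin.snoc_castSucc, Fin.snoc_last]
        rw [hN, sum_enum Iᶜ (fun t => (S t).card)]
        have hgoalZ : (∑ t ∈ Iᶜ, ((S t).card:ℤ)) + Z.card = ((cc+1:ℤ) - 1) * k := by
          linear_combination hcompl2 - hsumI - (k:ℤ) * hcc3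
        have : ((cc+1:ℤ) - 1) * k = ((cc+1-1) * k : ℕ) := by push_cast; ring
        rw [this] at hgoalZ
        exact_mod_cast hgoalZ
      · refine ⟨Fin.snoc (fun b => q (enum Iᶜ b)) G, ?_, ?_, ?_⟩
        · rcases hBC with ⟨t, ht, hqt⟩ | hG
          · obtain ⟨b, rfl⟩ := enum_surj Iᶜ t ht
            exact ⟨Fin.castSucc b, by rwa [Fin.snoc_castSucc]⟩
          · exact ⟨Fin.last cc, by rwa [Fin.snoc_last]⟩
        · intro a
          rcases Fin.eq_castSucc_or_eq_last a with ⟨b, rfl⟩ | rfl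
          · rw [Fin.snoc_castSucc, hT]
            simp only [Fin.snoc_castSucc]
            exact hdeg (enum Iᶜ b)
          · rw [Fin.snoc_last, hT]
            simp only [Fin.snoc_last]
            intro hGne
            have hGd : G.natDegree ≤ k - 1 - Z.card := by
              rw [hGdef]
              refine Polynomial.natDegree_sum_le_of_forall_le _ _ fun t ht => ?_
              refine le_trans Polynomial.natDegree_mul_le ?_
              rw [PP_natDegree, Finset.card_sdiff_of_subset (hZsub t ht)]
              have h5 := hdegN t
              have h6 := Finset.card_le_card (hZsub t ht)
              have h7 := hcardsN t
              omega
            omega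
        · rw [Fin.sum_univ_castSucc]
          simp only [Fin.snoc_castSucc, Fin.snoc_last, hT]
          rw [sum_enum Iᶜ (fun t => q t * PP (av n) (S t))]
          rw [← hFid, Finset.sum_compl_add_sum]
          exact hrelPP
    have hcontr := hminim (cc+1) n k T hcex
    rcases hcontr with h | ⟨h, _⟩ <;> omega
  · push_neg at hBC
    obtain ⟨hqc, hG0⟩ := hBC
    have ht₁I : t₁ ∈ I := by
      by_contra h
      exact ht₁ (hqc t₁ (Finset.mem_compl.mpr h))
    set mc := I.card with hmc
    set k' := k - Z.card with hk'
    set T : Fin mc → Finset (Fin n) := fun b => S (enum I b) \ Z with hT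
    have hcZS : ∀ b, Z.card ≤ (S (enum I b)).card :=
      fun b => Finset.card_le_card (hZsub _ (enum_mem I b))
    have hcex : IsCounterexample mc n k' T := by
      refine build_cex T hI2 ?_ ?_ (gm_sdiff hGM hI (enum I) (enum_injective I) (enum_mem I) (by rw [← hZdef]; omega)) ?_
      · intro b
        rw [hT]
        simp only
        rw [Finset.card_sdiff_of_subset (hZsub _ (enum_mem I b))]
        have := hcardsN (enum I b)
        have := hcZS b
        omega
      · have hZQ : ((∑ b : Fin mc, (T b).card : ℕ) : ℤ) = ((mc:ℤ) - 1) * ((k:ℤ) - Z.card) := by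
          push_cast
          have : ∀ b : Fin mc, ((T b).card : ℤ) = ((S (enum I b)).card : ℤ) - Z.card := by
            intro b
            rw [hT]
            simp only
            rw [Finset.card_sdiff_of_subset (hZsub _ (enum_mem I b)), Nat.cast_sub (hcZS b)]
          rw [Finset.sum_congr rfl (fun b _ => this b)]
          rw [Finset.sum_sub_distrib]
          rw [sum_enum I (fun t => ((S t).card : ℤ))]
          simp only [Finset.sum_const, Finset.card_univ, Fintype.card_fin, nsmul_eq_mul]
          linear_combination hsumI
        have : ((mc:ℤ) - 1) * ((k:ℤ) - Z.card) = (((mc - 1) * k' : ℕ) : ℤ) := by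
          push_cast [Nat.cast_sub (by omega : 1 ≤ mc), Nat.cast_sub (by omega : Z.card ≤ k), hk']
          ring
        rw [this] at hZQ
        exact_mod_cast hZQ
      · refine ⟨fun b => q (enum I b), ?_, ?_, ?_⟩
        · obtain ⟨b₁, rfl⟩ := enum_surj I t₁ ht₁I
          exact ⟨b₁, ht₁⟩
        · intro b hb
          have h5 := hdeg (enum I b) hb
          have h6 := hcZS b
          have h7 := hcardsN (enum I b)
          rw [hT]
          simp only
          rw [Finset.card_sdiff_of_subset (hZsub _ (enum_mem I b))]
          push_cast [Nat.cast_sub (hcZS b), Nat.cast_sub (by omega : Z.card ≤ k), hk']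
          omega
        · have := sum_enum I (fun t => q t * PP (av n) (S t \ Z))
          rw [hT]
          simp only
          rw [this, ← hGdef, hG0]
    have hcontr := hminim mc n k' T hcex
    rcases hcontr with h | ⟨h, _⟩ <;> omega

end NoTight

section VFamily

lemma gm_V {m n k : ℕ} {S : Fin m → Finset (Fin n)} (hGM : GMCond m n k S)
    (hstrict : ∀ I : Finset (Fin m), ∀ hI : I.Nonempty, 2 ≤ I.card → I ≠ Finset.univ →
      (k : ℤ) - ((I.inf' hI S).card : ℤ) ≠ ∑ t ∈ I, ((k:ℤ) - ((S t).card : ℤ)))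
    (hk1 : 1 ≤ k) (t₀ : Fin m) (i j : Fin n)
    (hit₀ : i ∉ S t₀) (hjt₀ : j ∉ S t₀)
    (hcover : ∀ t, t ≠ t₀ → i ∈ S t ∨ j ∈ S t) :
    GMCond m n (k-1) (fun t => if t = t₀ then S t₀ else (S t).erase (if j ∈ S t then j else i)) := by
  set r : Fin m → Fin n := fun t => if j ∈ S t then j else i with hrdef
  set V : Fin m → Finset (Fin n) := fun t => if t = t₀ then S t₀ else (S t).erase (r t) with hVdef
  have hrij : ∀ t, r t = i ∨ r t = j := by
    intro t
    by_cases h : j ∈ S t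
    · right; simp [hrdef, h]
    · left; simp [hrdef, h]
  have hrmem : ∀ t, t ≠ t₀ → r t ∈ S t := by
    intro t ht
    by_cases h : j ∈ S t
    · simpa [hrdef, h] using h
    · simp only [hrdef, if_neg h]
      exact (hcover t ht).resolve_right h
  have hVsub : ∀ t, V t ⊆ S t := by
    intro t
    by_cases h : t = t₀
    · subst h; simp [hVdef]
    · simp only [hVdef, if_neg h]
      exact Finset.erase_subset _ _
  have hVcard : ∀ t, t ≠ t₀ → (V t).card = (S t).card - 1 := by
    intro t ht
    rw [hVdef]
    simp only [if_neg ht]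
    exact Finset.card_erase_of_mem (hrmem t ht)
  have hScard1 : ∀ t, t ≠ t₀ → 1 ≤ (S t).card := fun t ht => Finset.card_pos.mpr ⟨r t, hrmem t ht⟩
  show GMCond m n (k-1) V
  intro I hI
  have hVI : I.inf' hI V ⊆ I.inf' hI S := by
    intro x hx
    rw [mem_inf' hI] at hx ⊢
    exact fun t ht => hVsub t (hx t ht)
  by_cases ht₀I : t₀ ∈ I
  · -- the intersections agree
    have hinfeq : I.inf' hI V = I.inf' hI S := by
      apply Finset.Subset.antisymm hVI
      intro x hx
      rw [mem_inf' hI] at hx ⊢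
      intro t ht
      have hxS : x ∈ S t := hx t ht
      have hxt₀ : x ∈ S t₀ := hx t₀ ht₀I
      by_cases h : t = t₀
      · subst h; simpa [hVdef] using hxS
      · simp only [hVdef, if_neg h]
        rw [Finset.mem_erase]
        refine ⟨?_, hxS⟩
        rcases hrij t with h | h <;> rw [h] <;> rintro rfl
        · exact hit₀ hxt₀
        · exact hjt₀ hxt₀
    have hsum : ∑ t ∈ I, (((k-1:ℕ):ℤ) - ((V t).card : ℤ))
        = ∑ t ∈ I, ((k:ℤ) - ((S t).card : ℤ)) - 1 := by
      rw [← Finset.add_sum_erase _ _ ht₀I, ← Finset.add_sum_erase _ _ ht₀I]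
      have h1 : ((V t₀).card : ℤ) = ((S t₀).card : ℤ) := by
        rw [hVdef]; simp
      have h2 : ∑ t ∈ I.erase t₀, (((k-1:ℕ):ℤ) - ((V t).card : ℤ))
          = ∑ t ∈ I.erase t₀, ((k:ℤ) - ((S t).card : ℤ)) := by
        refine Finset.sum_congr rfl fun t ht => ?_
        have ht' : t ≠ t₀ := (Finset.mem_erase.mp ht).1
        rw [hVcard t ht']
        have := hScard1 t ht'
        push_cast [Nat.cast_sub this, Nat.cast_sub hk1]
        ring
      rw [h1, h2]
      push_cast [Nat.cast_sub hk1]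
      ring
    rw [hinfeq, hsum]
    have := hGM I hI
    push_cast [Nat.cast_sub hk1]
    omega
  · -- t₀ ∉ I
    have hsum : ∑ t ∈ I, (((k-1:ℕ):ℤ) - ((V t).card : ℤ))
        = ∑ t ∈ I, ((k:ℤ) - ((S t).card : ℤ)) := by
      refine Finset.sum_congr rfl fun t ht => ?_
      have ht' : t ≠ t₀ := fun h => ht₀I (h ▸ ht)
      rw [hVcard t ht']
      have := hScard1 t ht'
      push_cast [Nat.cast_sub this, Nat.cast_sub hk1]
      ring
    rw [hsum]
    have hGMI := hGM I hI
    -- helper to conclude when the intersection drops by one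
    have hdrop : ∀ y, y ∈ I.inf' hI S → (∃ t ∈ I, y ∉ V t) →
        (((k-1:ℕ):ℤ) - ((I.inf' hI V).card : ℤ)) ≥ ∑ t ∈ I, ((k:ℤ) - ((S t).card : ℤ)) := by
      rintro y hy ⟨t₂, ht₂, hyt₂⟩
      have hsubV : I.inf' hI V ⊆ (I.inf' hI S).erase y := by
        intro x hx
        rw [Finset.mem_erase]
        refine ⟨?_, hVI hx⟩
        rintro rfl
        exact hyt₂ ((mem_inf' hI V x).mp hx t₂ ht₂)
      have hc := Finset.card_le_card hsubV
      rw [Finset.card_erase_of_mem hy] at hc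
      have hy1 : 1 ≤ (I.inf' hI S).card := Finset.card_pos.mpr ⟨y, hy⟩
      push_cast [Nat.cast_sub hk1]
      omega
    by_cases hjinf : j ∈ I.inf' hI S
    · refine hdrop j hjinf ?_
      have hIex := hI
      obtain ⟨t, ht⟩ := hIex
      refine ⟨t, ht, ?_⟩
      have ht' : t ≠ t₀ := fun h => ht₀I (h ▸ ht)
      have hjS : j ∈ S t := (mem_inf' hI S j).mp hjinf t ht
      rw [hVdef]
      simp only [if_neg ht']
      rw [Finset.mem_erase, hrdef]
      simp [hjS]
    · by_cases hiinf : i ∈ I.inf' hI S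
      · -- some t₂ ∈ I has j ∉ S t₂, so r t₂ = i
        have : ∃ t₂ ∈ I, j ∉ S t₂ := by
          by_contra h
          push_neg at h
          exact hjinf ((mem_inf' hI S j).mpr h)
        obtain ⟨t₂, ht₂, hjt₂⟩ := this
        refine hdrop i hiinf ⟨t₂, ht₂, ?_⟩
        have ht' : t₂ ≠ t₀ := fun h => ht₀I (h ▸ ht₂)
        rw [hVdef]
        simp only [if_neg ht']
        rw [Finset.mem_erase, hrdef]
        simp [hjt₂]
      · -- neither i nor j in the intersection : use strictness
        have hIne : I ≠ Finset.univ := fun h => ht₀I (h ▸ Finset.mem_univ t₀)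
        have hI2 : 2 ≤ I.card := by
          by_contra h
          have h1 : I.card = 1 := by
            have := Finset.card_pos.mpr hI
            omega
          obtain ⟨t, rfl⟩ := Finset.card_eq_one.mp h1
          have ht' : t ≠ t₀ := fun h => ht₀I (h ▸ Finset.mem_singleton_self t)
          rcases hcover t ht' with h | h
          · exact hiinf ((mem_inf' hI S i).mpr (fun t' ht'' => by
              rw [Finset.mem_singleton] at ht''; rwa [ht'']))
          · exact hjinf ((mem_inf' hI S j).mpr (fun t' ht'' => by
              rw [Finset.mem_singleton] at ht''; rwa [ht'']))
        have hne := hstrict I hI hI2 hIne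
        have hcV := Finset.card_le_card hVI
        push_cast [Nat.cast_sub hk1]
        omega
end VFamily

section NDrop

lemma map_inf' {ι α β : Type*} [Fintype α] [Fintype β] [DecidableEq α] [DecidableEq β]
    {J : Finset ι} (hJ : J.Nonempty)
    (e : α ↪ β) (f : ι → Finset α) :
    (J.inf' hJ f).map e = J.inf' hJ (fun t => (f t).map e) := by
  ext x
  rw [Finset.mem_map, mem_inf' hJ]
  constructor
  · rintro ⟨y, hy, rfl⟩
    intro t ht
    rw [Finset.mem_map]
    exact ⟨y, (mem_inf' hJ f y).mp hy t ht, rfl⟩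
  · intro h
    have hJ2 := hJ
    obtain ⟨t₁, ht₁⟩ := hJ2
    obtain ⟨y, hy, rfl⟩ := Finset.mem_map.mp (h t₁ ht₁)
    refine ⟨y, (mem_inf' hJ f y).mpr fun t ht => ?_, rfl⟩
    obtain ⟨y', hy', he⟩ := Finset.mem_map.mp (h t ht)
    rwa [← e.injective he]

lemma ndrop {m' n' k' : ℕ} (j : Fin (n'+1)) (T : Fin m' → Finset (Fin (n'+1)))
    (hj : ∀ t, j ∉ T t) (hm : 2 ≤ m') (hcard : ∀ t, (T t).card + 1 ≤ k')
    (hsum : ∑ t, (T t).card = (m' - 1) * k') (hGM : GMCond m' (n'+1) k' T)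
    (hrel : HasRel k' T (av (n'+1))) :
    ∃ W : Fin m' → Finset (Fin n'), IsCounterexample m' n' k' W := by
  set e : Fin n' ↪ Fin (n'+1) := j.succAboveOrderEmb.toEmbedding with hedef
  set W : Fin m' → Finset (Fin n') :=
    fun t => Finset.univ.filter (fun b => j.succAbove b ∈ T t) with hWdef
  have hmap : ∀ t, (W t).map e = T t := by
    intro t
    ext x
    rw [Finset.mem_map]
    constructor
    · rintro ⟨b, hb, rfl⟩
      rw [hWdef] at hb
      simp at hb; exact hb
    · intro hx
      have hxj : x ≠ j := fun h => hj t (h ▸ hx)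
      obtain ⟨b, rfl⟩ := Fin.exists_succAbove_eq hxj
      exact ⟨b, by rw [hWdef]; simpa using hx, rfl⟩
  have hcardW : ∀ t, (W t).card = (T t).card := fun t => by
    rw [← hmap t, Finset.card_map]
  have h0k : 0 < k' := by
    obtain ⟨t⟩ : Nonempty (Fin m') := ⟨⟨0, by omega⟩⟩
    have := hcard t; omega
  refine ⟨W, build_cex W hm (fun t => by rw [hcardW]; exact hcard t) ?_ ?_ ?_⟩
  · calc ∑ t, (W t).card = ∑ t, (T t).card := Finset.sum_congr rfl fun t _ => hcardW t
      _ = (m' - 1) * k' := hsum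
  · intro J hJ
    have h1 := hGM J hJ
    have h2 : (J.inf' hJ W).card = (J.inf' hJ T).card := by
      rw [← Finset.card_map e, map_inf' hJ e W]
      congr 1
      exact Finset.inf'_congr hJ rfl (fun t _ => hmap t)
    rw [h2]
    calc (k':ℤ) - ((J.inf' hJ T).card : ℤ) ≥ ∑ t ∈ J, ((k':ℤ) - ((T t).card : ℤ)) := h1
      _ = ∑ t ∈ J, ((k':ℤ) - ((W t).card : ℤ)) :=
        Finset.sum_congr rfl fun t _ => by rw [hcardW]
  · have hkW : ∀ t, (W t).card < k' := fun t => by rw [hcardW]; have := hcard t; omega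
    have hsumW : ∑ t, (k' - (W t).card) = k' := by
      refine sum_k_sub _ (fun t => by rw [hcardW]; exact hcard t) ?_ (by omega)
      rw [← hsum]
      exact Finset.sum_congr rfl fun t _ => hcardW t
    refine hasRel_descend h0k hkW hsumW (j.succAbove) (Fin.succAbove_right_injective) ?_
    obtain ⟨q, h1, h2, h3⟩ := hrel
    refine ⟨q, h1, fun t ht => by rw [hcardW]; exact h2 t ht, ?_⟩
    rw [← h3]
    refine Finset.sum_congr rfl fun t _ => ?_
    congr 1
    rw [← hmap t]
    simp only [PP]
    rw [Finset.prod_map]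
    rfl

end NDrop


/-- **Lemma 2 (iii).** For a minimal counterexample, for all `i, j ∈ [n]`:
`|Q_i ∪ Q_j| ≠ m - 1`. -/
theorem minimal_counterexample_union_card_ne (m n k : ℕ) (S : Fin m → Finset (Fin n))
    (hmin : IsMinimalCounterexample m n k S) :
    ∀ i j : Fin n, ((Q S i ∪ Q S j).card : ℤ) ≠ (m : ℤ) - 1 := by
  intro i j hcard
  have hminim := hmin.2
  obtain ⟨⟨hm2, hcards, hsumS, hGM, q0, hq0ne, hq0deg, hq0rel⟩, -⟩ := hmin
  obtain ⟨n', rfl⟩ : ∃ n', n = n' + 1 := ⟨n - 1, by have := i.pos; omega⟩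
  have hm1 : 1 ≤ m := by omega
  have hUcard : (Q S i ∪ Q S j).card = m - 1 := by omega
  have hUc : ((Q S i ∪ Q S j)ᶜ).card = 1 := by
    rw [Finset.card_compl, hUcard]
    simp only [Fintype.card_fin]
    omega
  obtain ⟨t₀, ht₀⟩ := Finset.card_eq_one.mp hUc
  have ht₀U : t₀ ∉ Q S i ∪ Q S j := by
    have h2 : t₀ ∈ (Q S i ∪ Q S j)ᶜ := ht₀ ▸ Finset.mem_singleton_self t₀
    rwa [Finset.mem_compl] at h2
  have hit₀ : i ∉ S t₀ := fun h => ht₀U (Finset.mem_union_left _ (by simp [Q, h]))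
  have hjt₀ : j ∉ S t₀ := fun h => ht₀U (Finset.mem_union_right _ (by simp [Q, h]))
  have hcover : ∀ t, t ≠ t₀ → i ∈ S t ∨ j ∈ S t := by
    intro t ht
    have h2 : t ∉ ((Q S i ∪ Q S j)ᶜ) := by rw [ht₀]; simp [ht]
    rw [Finset.mem_compl, not_not] at h2
    simpa [Q] using h2
  have hk1 : 1 ≤ k := by
    have h1 := hcards t₀
    have h2 : (0:ℤ) ≤ ((S t₀).card : ℤ) := Int.natCast_nonneg _
    omega
  have hcardsN : ∀ t, (S t).card < k := fun t => by have := hcards t; omega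
  have hk2 : 2 ≤ k := by
    by_contra hcon
    have hST : ∀ t, S t = ∅ := fun t =>
      Finset.card_eq_zero.mp (by have := hcardsN t; omega)
    have hnt : Nontrivial (Fin m) :=
      ⟨⟨⟨0, by omega⟩, ⟨1, by omega⟩, Fin.ne_of_val_ne (by norm_num)⟩⟩
    obtain ⟨t, ht⟩ := exists_ne t₀
    rcases hcover t ht with h | h <;> rw [hST t] at h <;> exact absurd h (Finset.notMem_empty _)
  have hstrict := no_tight ⟨⟨hm2, hcards, hsumS, hGM, q0, hq0ne, hq0deg, hq0rel⟩, hminim⟩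
  set r : Fin m → Fin (n'+1) := fun t => if j ∈ S t then j else i with hrdef
  set V : Fin m → Finset (Fin (n'+1)) :=
    fun t => if t = t₀ then S t₀ else (S t).erase (r t) with hVdef
  have hrij : ∀ t, r t = i ∨ r t = j := by
    intro t
    by_cases h : j ∈ S t
    · right; simp [hrdef, h]
    · left; simp [hrdef, h]
  have hrmem : ∀ t, t ≠ t₀ → r t ∈ S t := by
    intro t ht
    by_cases h : j ∈ S t
    · simpa [hrdef, h] using h
    · simp only [hrdef, if_neg h]
      exact (hcover t ht).resolve_right h
  have hVt₀ : V t₀ = S t₀ := by simp [hVdef]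
  have hVne : ∀ t, t ≠ t₀ → V t = (S t).erase (r t) := fun t ht => by simp [hVdef, ht]
  have hVcard : ∀ t, t ≠ t₀ → (V t).card = (S t).card - 1 := by
    intro t ht
    rw [hVne t ht, Finset.card_erase_of_mem (hrmem t ht)]
  have hScard1 : ∀ t, t ≠ t₀ → 1 ≤ (S t).card :=
    fun t ht => Finset.card_pos.mpr ⟨r t, hrmem t ht⟩
  have hjV : ∀ t, j ∉ V t := by
    intro t
    by_cases ht : t = t₀
    · rw [ht, hVt₀]; exact hjt₀
    · rw [hVne t ht]
      by_cases h : j ∈ S t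
      · simp [Finset.mem_erase, hrdef, h]
      · simp [Finset.mem_erase, h]
  have hGMV : GMCond m (n'+1) (k-1) V := by
    rw [hVdef, hrdef]
    exact gm_V hGM hstrict hk1 t₀ i j hit₀ hjt₀ hcover
  set f : Fin (n'+1) → Fin (n'+1) := fun ℓ => if ℓ = j then i else ℓ with hfdef
  have hsumdet : ∑ t, (k - (S t).card) = k :=
    sum_k_sub _ (fun t => hcardsN t) hsumS hm1
  have hrel1 : HasRel k S (av (n'+1)) :=
    ⟨q0, hq0ne, hq0deg, by rw [← hq0rel]; exact Finset.sum_congr rfl fun t _ => by rw [pS_eq_PP]⟩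
  obtain ⟨q, ⟨tw, htw⟩, hdeg, hrel⟩ := hasRel_merge (by omega) hcardsN hsumdet f hrel1
  set a' : Fin (n'+1) → Kf (n'+1) := av (n'+1) ∘ f with ha'def
  set αi : Kf (n'+1) := av (n'+1) i with hαidef
  have hfnotj : ∀ ℓ, ℓ ≠ j → a' ℓ = av (n'+1) ℓ := by
    intro ℓ h; simp [ha'def, hfdef, h]
  have hfi : f i = i := by simp [hfdef]
  have hfj : f j = i := by simp [hfdef]
  have ha'r : ∀ t, t ≠ t₀ → a' (r t) = αi := by
    intro t ht
    rcases hrij t with h | h <;> rw [h] <;> simp [ha'def, hfi, hfj, hαidef]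
  have hPPt : ∀ t, t ≠ t₀ → PP a' (S t) = (Polynomial.X - Polynomial.C αi) * PP a' (V t) := by
    intro t ht
    rw [hVne t ht, PP, PP, ← Finset.mul_prod_erase _ _ (hrmem t ht), ha'r t ht]
  have hPPV : ∀ t, PP a' (V t) = PP (av (n'+1)) (V t) := by
    intro t
    rw [PP, PP]
    exact Finset.prod_congr rfl fun ℓ hℓ => by rw [hfnotj ℓ (fun h => hjV t (h ▸ hℓ))]
  have hPPt₀ : PP a' (S t₀) = PP (av (n'+1)) (S t₀) := by
    have h := hPPV t₀
    rwa [hVt₀] at h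
  have hXsub_ne : (Polynomial.X - Polynomial.C αi) ≠ (0 : Polynomial (Kf (n'+1))) :=
    Polynomial.X_sub_C_ne_zero αi
  have heval : Polynomial.eval αi (PP a' (S t₀)) ≠ 0 := by
    rw [hPPt₀, PP, Polynomial.eval_prod]
    rw [Finset.prod_ne_zero_iff]
    intro ℓ hℓ
    simp only [Polynomial.eval_sub, Polynomial.eval_X, Polynomial.eval_C]
    intro h0
    have h1 : αi = av (n'+1) ℓ := sub_eq_zero.mp h0
    have h2 : i = ℓ := av_injective _ (hαidef ▸ h1)
    exact hit₀ (h2 ▸ hℓ)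
  have hdvd : (Polynomial.X - Polynomial.C αi) ∣ q t₀ := by
    rw [Polynomial.dvd_iff_isRoot]
    have heval0 : Polynomial.eval αi (∑ t, q t * PP a' (S t)) = 0 := by rw [hrel]; simp
    rw [Polynomial.eval_finset_sum] at heval0
    have hz : ∀ t ∈ Finset.univ, t ≠ t₀ → Polynomial.eval αi (q t * PP a' (S t)) = 0 := by
      intro t _ ht
      rw [hPPt t ht]
      simp
    rw [Finset.sum_eq_single t₀ hz (fun h => absurd (Finset.mem_univ t₀) h)] at heval0
    rw [Polynomial.eval_mul] at heval0
    exact (mul_eq_zero.mp heval0).resolve_right heval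
  obtain ⟨rq, hrq⟩ := hdvd
  set q' : Fin m → Polynomial (Kf (n'+1)) := fun t => if t = t₀ then rq else q t with hq'def
  have hq't₀ : q' t₀ = rq := by simp [hq'def]
  have hq'ne : ∀ t, t ≠ t₀ → q' t = q t := fun t ht => by simp [hq'def, ht]
  have hrelV : ∑ t, q' t * PP (av (n'+1)) (V t) = 0 := by
    have hfactor : (Polynomial.X - Polynomial.C αi) * (∑ t, q' t * PP (av (n'+1)) (V t))
        = ∑ t, q t * PP a' (S t) := by
      rw [Finset.mul_sum]
      refine Finset.sum_congr rfl fun t _ => ?_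
      by_cases ht : t = t₀
      · subst ht
        rw [hq't₀, hVt₀, ← hPPt₀, hrq]
        ring
      · rw [hq'ne t ht, hPPt t ht, hPPV t]
        ring
    rw [hrel] at hfactor
    exact (mul_eq_zero.mp hfactor).resolve_left hXsub_ne
  have hexV : ∃ t, t ≠ t₀ ∧ q t ≠ 0 := by
    by_contra hcon
    push_neg at hcon
    have hqt₀ : q t₀ ≠ 0 := by
      rcases eq_or_ne tw t₀ with rfl | h
      · exact htw
      · exact absurd (hcon tw h) htw
    have h2 := hrel
    rw [Finset.sum_eq_single t₀ (fun t _ ht => by rw [hcon t ht, zero_mul])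
      (fun h => absurd (Finset.mem_univ t₀) h)] at h2
    exact mul_ne_zero hqt₀ (PP_ne_zero a' (S t₀)) h2
  -- sums over the complement of t₀
  have hccM : ({t₀}ᶜ : Finset (Fin m)).card = m - 1 := by
    rw [Finset.card_compl]; simp
  have hsumSZ : ∑ t, ((S t).card:ℤ) = ((m:ℤ)-1)*k := by
    have h := (Nat.cast_inj (R := ℤ)).mpr hsumS
    push_cast [Nat.cast_sub hm1] at h
    exact h
  have hScomplZ : ∑ t ∈ ({t₀}ᶜ : Finset (Fin m)), ((S t).card:ℤ)
      = ((m:ℤ)-1)*k - ((S t₀).card:ℤ) := by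
    have h := Finset.sum_compl_add_sum ({t₀} : Finset (Fin m)) (fun t => ((S t).card:ℤ))
    rw [Finset.sum_singleton] at h
    rw [hsumSZ] at h
    linarith
  have hVcomplZ : ∑ t ∈ ({t₀}ᶜ : Finset (Fin m)), ((V t).card:ℤ)
      = ((m:ℤ)-1)*k - ((S t₀).card:ℤ) - ((m:ℤ)-1) := by
    have h1 : ∑ t ∈ ({t₀}ᶜ : Finset (Fin m)), ((V t).card:ℤ)
        = ∑ t ∈ ({t₀}ᶜ : Finset (Fin m)), (((S t).card:ℤ) - 1) := by
      refine Finset.sum_congr rfl fun t ht => ?_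
      rw [Finset.mem_compl, Finset.mem_singleton] at ht
      rw [hVcard t ht]
      push_cast [Nat.cast_sub (hScard1 t ht)]
      ring
    rw [h1, Finset.sum_sub_distrib, hScomplZ]
    simp only [Finset.sum_const, hccM, nsmul_eq_mul, mul_one]
    push_cast [Nat.cast_sub hm1]
    ring
  by_cases hbig : (S t₀).card = k - 1
  · -- q' t₀ is forced to vanish; drop the index t₀
    have hbigZ : ((S t₀).card : ℤ) = (k:ℤ) - 1 := by
      rw [hbig]; push_cast [Nat.cast_sub hk1]; ring
    have hrq0 : rq = 0 := by
      by_contra hrq0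
      have hqt₀ : q t₀ ≠ 0 := by rw [hrq]; exact mul_ne_zero hXsub_ne hrq0
      have hd := hdeg t₀ hqt₀
      have hnd : (q t₀).natDegree = 1 + rq.natDegree := by
        rw [hrq, Polynomial.natDegree_mul hXsub_ne hrq0, Polynomial.natDegree_X_sub_C]
      rw [hnd] at hd
      omega
    have hrelc : ∑ t ∈ ({t₀}ᶜ : Finset (Fin m)), q t * PP (av (n'+1)) (V t) = 0 := by
      have hsplit := Finset.sum_compl_add_sum ({t₀} : Finset (Fin m))
        (fun t => q' t * PP (av (n'+1)) (V t))
      rw [hrelV, Finset.sum_singleton, hq't₀, hrq0, zero_mul, add_zero] at hsplit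
      rw [← hsplit]
      refine Finset.sum_congr rfl fun t ht => ?_
      rw [Finset.mem_compl, Finset.mem_singleton] at ht
      rw [hq'ne t ht]
    rcases Nat.lt_or_ge m 3 with hm3 | hm3
    · -- m = 2 : direct contradiction
      obtain ⟨t₁, ht₁, hq₁⟩ := hexV
      have hc1 : ({t₀}ᶜ : Finset (Fin m)).card = 1 := by omega
      obtain ⟨t₂, ht₂⟩ := Finset.card_eq_one.mp hc1
      have ht₁mem : t₁ ∈ ({t₀}ᶜ : Finset (Fin m)) := by simp [ht₁]
      rw [ht₂, Finset.mem_singleton] at ht₁mem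
      have h3 := hrelc
      rw [ht₂, Finset.sum_singleton, ← ht₁mem] at h3
      exact mul_ne_zero hq₁ (PP_ne_zero _ _) h3
    · -- m ≥ 3 : smaller counterexample with m-1 sets
      have hφne : ∀ b, enum ({t₀}ᶜ : Finset (Fin m)) b ≠ t₀ := by
        intro b h
        have h2 := enum_mem ({t₀}ᶜ : Finset (Fin m)) b
        rw [Finset.mem_compl, Finset.mem_singleton] at h2
        exact h2 h
      have hTcard : ∀ b, (V (enum ({t₀}ᶜ : Finset (Fin m)) b)).card + 1 ≤ k - 1 := by
        intro b
        rw [hVcard _ (hφne b)]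
        have h1 := hcardsN (enum ({t₀}ᶜ : Finset (Fin m)) b)
        have h2 := hScard1 _ (hφne b)
        omega
      have hccZ : ((({t₀}ᶜ : Finset (Fin m)).card : ℤ)) = (m:ℤ) - 1 := by
        rw [hccM]; push_cast [Nat.cast_sub hm1]; ring
      have hTsum : ∑ b, (V (enum ({t₀}ᶜ : Finset (Fin m)) b)).card
          = (({t₀}ᶜ : Finset (Fin m)).card - 1) * (k-1) := by
        have hZ : (∑ b, ((V (enum ({t₀}ᶜ : Finset (Fin m)) b)).card:ℤ))
            = ((({t₀}ᶜ : Finset (Fin m)).card:ℤ) - 1) * ((k:ℤ)-1) := by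
          rw [sum_enum ({t₀}ᶜ : Finset (Fin m)) (fun t => ((V t).card:ℤ)), hVcomplZ]
          linear_combination (-1:ℤ) * hbigZ - ((k:ℤ)-1) * hccZ
        have hcast : ((({t₀}ᶜ : Finset (Fin m)).card:ℤ) - 1) * ((k:ℤ)-1)
            = (((({t₀}ᶜ : Finset (Fin m)).card - 1) * (k-1) : ℕ) : ℤ) := by
          push_cast [Nat.cast_sub hk1, Nat.cast_sub (by omega : 1 ≤ ({t₀}ᶜ : Finset (Fin m)).card)]
          ring
        rw [hcast] at hZ
        exact_mod_cast (by push_cast at hZ ⊢; exact_mod_cast hZ : _)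
      have hrelT : HasRel (k-1) (fun b => V (enum ({t₀}ᶜ : Finset (Fin m)) b)) (av (n'+1)) := by
        refine ⟨fun b => q (enum ({t₀}ᶜ : Finset (Fin m)) b), ?_, ?_, ?_⟩
        · obtain ⟨t₁, ht₁, hq₁⟩ := hexV
          obtain ⟨b₁, hb₁⟩ := enum_surj ({t₀}ᶜ : Finset (Fin m)) t₁ (by simp [ht₁])
          refine ⟨b₁, ?_⟩
          show q (enum ({t₀}ᶜ : Finset (Fin m)) b₁) ≠ 0
          rw [hb₁]
          exact hq₁
        · intro b hb
          have h1 := hdeg _ hb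
          have h2 := hScard1 _ (hφne b)
          rw [hVcard _ (hφne b)]
          push_cast [Nat.cast_sub hk1, Nat.cast_sub h2]
          push_cast at h1
          omega
        · rw [sum_enum ({t₀}ᶜ : Finset (Fin m)) (fun t => q t * PP (av (n'+1)) (V t))]
          exact hrelc
      obtain ⟨W, hW⟩ := ndrop j (fun b => V (enum ({t₀}ᶜ : Finset (Fin m)) b))
        (fun b => hjV _) (by omega) hTcard hTsum
        (gm_subfamily hGMV _ (enum_injective _)) hrelT
      have hcontr := hminim _ n' (k-1) W hW
      rcases hcontr with h | ⟨h, -⟩ <;> omega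
  · -- keep all m indices
    have hTcard : ∀ t, (V t).card + 1 ≤ k - 1 := by
      intro t
      by_cases ht : t = t₀
      · rw [ht, hVt₀]
        have := hcardsN t₀
        omega
      · rw [hVcard t ht]
        have h1 := hcardsN t
        have h2 := hScard1 t ht
        omega
    have hTsum : ∑ t, (V t).card = (m - 1) * (k-1) := by
      have hZ : (∑ t, ((V t).card:ℤ)) = ((m:ℤ) - 1) * ((k:ℤ)-1) := by
        have h := Finset.sum_compl_add_sum ({t₀} : Finset (Fin m)) (fun t => ((V t).card:ℤ))
        rw [Finset.sum_singleton, hVcomplZ] at h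
        have hVt₀c : ((V t₀).card:ℤ) = ((S t₀).card:ℤ) := by rw [hVt₀]
        rw [hVt₀c] at h
        rw [← h]
        ring
      have hcast : ((m:ℤ) - 1) * ((k:ℤ)-1) = (((m - 1) * (k-1) : ℕ) : ℤ) := by
        push_cast [Nat.cast_sub hk1, Nat.cast_sub hm1]
        ring
      rw [hcast] at hZ
      exact_mod_cast hZ
    have hrelT : HasRel (k-1) V (av (n'+1)) := by
      refine ⟨q', ?_, ?_, hrelV⟩
      · obtain ⟨t₁, ht₁, hq₁⟩ := hexV
        exact ⟨t₁, by rwa [hq'ne t₁ ht₁]⟩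
      · intro t ht
        by_cases heq : t = t₀
        · rw [heq] at ht ⊢
          rw [hq't₀] at ht ⊢
          have hqt₀ : q t₀ ≠ 0 := by rw [hrq]; exact mul_ne_zero hXsub_ne ht
          have hd := hdeg t₀ hqt₀
          have hnd : (q t₀).natDegree = 1 + rq.natDegree := by
            rw [hrq, Polynomial.natDegree_mul hXsub_ne ht, Polynomial.natDegree_X_sub_C]
          rw [hVt₀]
          omega
        · rw [hq'ne t heq] at ht ⊢
          have h1 := hdeg t ht
          have h2 := hScard1 t heq
          rw [hVcard t heq]
          omega
    obtain ⟨W, hW⟩ := ndrop j V hjV hm2 hTcard hTsum hGMV hrelT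
    have hcontr := hminim m n' (k-1) W hW
    rcases hcontr with h | ⟨-, h | ⟨h, hk⟩⟩ <;> omega
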